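/- The following are equivalent: (i) E(|u|²) < ∞ μ-a.e.; (ii) the measure on 𝒜 defined by A ↦ ∫_A |u|² dμ (A ∈ 𝒜), i.e. the restriction to 𝒜 of the measure with density |u|² with respect to μ, is σ-finite. -/

import Mathlib

open MeasureTheory Filter ENNReal NNReal

noncomputable section

variable {X : Type*}

/-- A set `A` in the sub-σ-algebra `m` is *admissible* for the weight `u` if
`μ A + ∫_A |u|² dμ < ∞`. -/
def Admissible (m : MeasurableSpace X) [m0 : MeasurableSpace X] (μ : Measure X)
    (u : X → ℂ) (A : Set X) : Prop :=
  MeasurableSet[m] A ∧ μ A + ∫⁻ x in A, (‖u x‖₊ : ℝ≥0∞) ^ 2 ∂μ < ⊤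

/-- `gf` is a version of `E(u·f)`, i.e. `gf` is an `m`-measurable function in `L²(μ)` with
`∫_A u·f dμ = ∫_A gf dμ` for every admissible `A`.  `f ∈ D(EM_u)` iff `f ∈ L²(μ)` and such a
`gf` exists. -/
def IsWCE (m : MeasurableSpace X) [m0 : MeasurableSpace X] (μ : Measure X)
    (u f gf : X → ℂ) : Prop :=
  StronglyMeasurable[m] gf ∧ MemLp gf 2 μ ∧
    ∀ A : Set X, Admissible m μ u A → ∫ x in A, u x * f x ∂μ = ∫ x in A, gf x ∂μ

/-- `E(|u|²) < ∞` a.e. iff the restriction to `m` of the measure with density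
`|u|²` with respect to `μ` is σ-finite. -/
theorem stmt2 (m : MeasurableSpace X) [m0 : MeasurableSpace X] (hm : m ≤ m0)
    (μ : Measure X) [SigmaFinite μ] [SigmaFinite (μ.trim hm)]
    (u : X → ℂ) (hu : Measurable u)
    (g : X → ℝ≥0∞) (hgm : Measurable[m] g)
    (hg : ∀ A : Set X, MeasurableSet[m] A →
      ∫⁻ x in A, (‖u x‖₊ : ℝ≥0∞) ^ 2 ∂μ = ∫⁻ x in A, g x ∂μ) :
    (∀ᵐ x ∂μ, g x < ⊤) ↔
      SigmaFinite ((μ.withDensity fun x => (‖u x‖₊ : ℝ≥0∞) ^ 2).trim hm) := by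
  have hw : Measurable fun x => (‖u x‖₊ : ℝ≥0∞) ^ 2 :=
    (hu.nnnorm.coe_nnreal_ennreal).pow_const 2
  -- key: the trimmed measure equals (μ.trim hm).withDensity g
  have hkey : (μ.withDensity fun x => (‖u x‖₊ : ℝ≥0∞) ^ 2).trim hm
      = (μ.trim hm).withDensity g := by
    refine @Measure.ext _ m _ _ fun B hB => ?_
    rw [trim_measurableSet_eq hm hB, withDensity_apply _ (hm B hB),
      withDensity_apply _ hB, hg B hB, restrict_trim hm μ hB,
      lintegral_trim hm hgm]
  -- the "bad" set has the same measure under μ and μ.trim hm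
  have hbad : MeasurableSet[m] {x | ¬ g x < ⊤} := by
    simp only [not_lt, top_le_iff]
    exact hgm (measurableSet_singleton ⊤)
  have hμbad : μ.trim hm {x | ¬ g x < ⊤} = μ {x | ¬ g x < ⊤} :=
    trim_measurableSet_eq hm hbad
  rw [hkey]
  constructor
  · intro h
    have h' : ∀ᵐ x ∂(μ.trim hm), g x ≠ ⊤ := by
      rw [ae_iff] at h ⊢
      simp only [not_lt, top_le_iff] at h
      simp only [not_lt, top_le_iff] at hμbad
      simpa only [ne_eq, not_not, hμbad] using h
    exact SigmaFinite.withDensity_of_ne_top h'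
  · intro h
    have h1 : ∀ᵐ x ∂(μ.trim hm),
        ((μ.trim hm).withDensity g).rnDeriv (μ.trim hm) x < ⊤ :=
      Measure.rnDeriv_lt_top _ _
    have h2 : ((μ.trim hm).withDensity g).rnDeriv (μ.trim hm) =ᵐ[μ.trim hm] g :=
      Measure.rnDeriv_withDensity (μ.trim hm) hgm
    have h3 : ∀ᵐ x ∂(μ.trim hm), g x < ⊤ := by
      filter_upwards [h1, h2] with x h1x h2x
      rwa [h2x] at h1x
    rw [ae_iff] at h3 ⊢
    rwa [hμbad] at h3
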